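/- For x, y real with x ≠ 0, x ≠ 2y, and x ≠ 3y, the 5×5 symmetric matrix M with rows (2x−2y, −2y, −2y, −2y, −y), (−2y, 2x−2y, −2y, x−2y, −y), (−2y, −2y, 2x−2y, x−2y, x−y), (−2y, x−2y, x−2y, 2x−2y, −y), (−y, −y, x−y, −y, x−y) is invertible, and the bottom-right 2×2 block of M⁻¹ equals [[2(x−y)/(x(x−2y)), 2/(x−2y)], [2/(x−2y), 4/(x−2y)]]. -/

import Mathlib

open Matrix

set_option maxHeartbeats 2000000 in
theorem stmt19 (x y : ℝ) (hx : x ≠ 0) (hx2 : x ≠ 2 * y) (hx3 : x ≠ 3 * y)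
    (M : Matrix (Fin 5) (Fin 5) ℝ)
    (hM : M = Matrix.of
      ![![2 * x - 2 * y, -2 * y, -2 * y, -2 * y, -y],
        ![-2 * y, 2 * x - 2 * y, -2 * y, x - 2 * y, -y],
        ![-2 * y, -2 * y, 2 * x - 2 * y, x - 2 * y, x - y],
        ![-2 * y, x - 2 * y, x - 2 * y, 2 * x - 2 * y, -y],
        ![-y, -y, x - y, -y, x - y]]) :
    IsUnit M ∧
      M⁻¹ 3 3 = 2 * (x - y) / (x * (x - 2 * y)) ∧
      M⁻¹ 3 4 = 2 / (x - 2 * y) ∧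
      M⁻¹ 4 3 = 2 / (x - 2 * y) ∧
      M⁻¹ 4 4 = 4 / (x - 2 * y) := by
  have h2y : x - 2 * y ≠ 0 := sub_ne_zero.mpr hx2
  have h3y : x - 3 * y ≠ 0 := sub_ne_zero.mpr hx3
  have hdne : (2 * x^5 - 10 * x^4 * y + 12 * x^3 * y^2) ≠ 0 := by
    have h : 2 * x^5 - 10 * x^4 * y + 12 * x^3 * y^2
        = 2 * x^3 * (x - 2 * y) * (x - 3 * y) := by ring
    rw [h]; positivity
  set P : Matrix (Fin 5) (Fin 5) ℝ := Matrix.of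
    ![![x^4 - 4*x^3*y + 4*x^2*y^2, x^3*y - 2*x^2*y^2, x^3*y - 2*x^2*y^2, 0, 0],
      ![x^3*y - 2*x^2*y^2, 2*x^4 - 8*x^3*y + 7*x^2*y^2, 2*x^4 - 6*x^3*y + x^2*y^2, -2*x^4 + 8*x^3*y - 6*x^2*y^2, -2*x^4 + 6*x^3*y],
      ![x^3*y - 2*x^2*y^2, 2*x^4 - 6*x^3*y + x^2*y^2, 6*x^4 - 20*x^3*y + 7*x^2*y^2, -4*x^4 + 14*x^3*y - 6*x^2*y^2, -6*x^4 + 18*x^3*y],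
      ![0, -2*x^4 + 8*x^3*y - 6*x^2*y^2, -4*x^4 + 14*x^3*y - 6*x^2*y^2, 4*x^4 - 16*x^3*y + 12*x^2*y^2, 4*x^4 - 12*x^3*y],
      ![0, -2*x^4 + 6*x^3*y, -6*x^4 + 18*x^3*y, 4*x^4 - 12*x^3*y, 8*x^4 - 24*x^3*y]] with hP
  have hMP : M * P = (2 * x^5 - 10 * x^4 * y + 12 * x^3 * y^2) • (1 : Matrix (Fin 5) (Fin 5) ℝ) := by
    ext i j
    rw [hM, hP]
    fin_cases i <;> fin_cases j <;>
      simp [Matrix.mul_apply, Fin.sum_univ_five, Matrix.one_apply,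
        Matrix.smul_apply, Matrix.vecHead, Matrix.vecTail] <;> ring
  have hMN : M * ((2 * x^5 - 10 * x^4 * y + 12 * x^3 * y^2)⁻¹ • P) = 1 := by
    rw [Matrix.mul_smul, hMP, smul_smul, inv_mul_cancel₀ hdne, one_smul]
  have hinv : M⁻¹ = (2 * x^5 - 10 * x^4 * y + 12 * x^3 * y^2)⁻¹ • P :=
    Matrix.inv_eq_right_inv hMN
  have hx2y : x * (x - 2 * y) ≠ 0 := mul_ne_zero hx h2y
  refine ⟨(Matrix.isUnit_iff_isUnit_det M).mpr (Matrix.isUnit_det_of_right_inverse hMN), ?_, ?_, ?_, ?_⟩ <;>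
    · rw [hinv, Matrix.smul_apply, hP]
      simp [Matrix.vecHead, Matrix.vecTail, Matrix.cons_val_three, Matrix.cons_val_four,
        Function.comp, smul_eq_mul]
      rw [inv_mul_eq_div, div_eq_div_iff hdne (by first | exact hx2y | exact h2y)]
      ring
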